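/- With χ' as in the cell problem (χ'(r) = -(2/σ²)(∫_{-∞}^r g̃ p_R)/p_R(r)), the quantity A₂ = ∫ χ(r) g̃(r) p_R(r) dr equals (σ²/2)∫ (χ'(r))² p_R(r) dr = (2/σ²) ∫_ℝ (∫_{-∞}^r g̃(s)p_R(s)ds)² / p_R(r) dr, and in particular A₂ ≥ 0. -/

import Mathlib

open MeasureTheory Filter

/-- The effective-diffusivity enhancement term: with `χ'(r) = -(2/σ²)H(r)/p(r)`
where `H(r) = ∫_{-∞}^r g̃ p`, one has
`A₂ = ∫ χ g̃ p = (σ²/2)∫ (χ')² p = (2/σ²)∫ H²/p ≥ 0`. -/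
theorem effective_diffusivity_enhancement
    (σ2 : ℝ) (hσ : 0 < σ2)
    (gtil p χ H : ℝ → ℝ) (hp : ∀ r, 0 < p r)
    (hH : ∀ r, H r = ∫ s in Set.Iic r, gtil s * p s)
    (hHd : ∀ r, HasDerivAt H (gtil r * p r) r)
    (hχd : ∀ r, DifferentiableAt ℝ χ r)
    (hchi : ∀ r, deriv χ r = -(2 / σ2) * H r / p r)
    (hdecayT : Tendsto (fun r => χ r * H r) atTop (nhds 0))
    (hdecayB : Tendsto (fun r => χ r * H r) atBot (nhds 0))
    (hint1 : Integrable (fun r => χ r * gtil r * p r))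
    (hint2 : Integrable (fun r => deriv χ r * H r)) :
    (∫ r : ℝ, χ r * gtil r * p r) = (σ2 / 2) * ∫ r : ℝ, (deriv χ r) ^ 2 * p r ∧
      (σ2 / 2) * (∫ r : ℝ, (deriv χ r) ^ 2 * p r)
        = (2 / σ2) * ∫ r : ℝ, (H r) ^ 2 / p r ∧
      0 ≤ ∫ r : ℝ, χ r * gtil r * p r := by
  have hσ' : σ2 ≠ 0 := ne_of_gt hσ
  have hp' : ∀ r, p r ≠ 0 := fun r => ne_of_gt (hp r)
  -- pointwise identities
  have key1 : ∀ r, deriv χ r * H r = -((2 / σ2) * ((H r) ^ 2 / p r)) := by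
    intro r; rw [hchi r]; field_simp [hp' r]
  have key2 : ∀ r, (deriv χ r) ^ 2 * p r = (4 / σ2 ^ 2) * ((H r) ^ 2 / p r) := by
    intro r; rw [hchi r]; field_simp [hp' r]; ring
  -- integration by parts
  have hibp : (∫ r : ℝ, χ r * (gtil r * p r)) = -∫ r : ℝ, deriv χ r * H r := by
    have := integral_mul_deriv_eq_deriv_mul (u := χ) (u' := deriv χ) (v := H)
      (v' := fun r => gtil r * p r) (a' := (0 : ℝ)) (b' := (0 : ℝ))
      (fun x _ => (hχd x).hasDerivAt) (fun x _ => hHd x)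
      (by simpa [Pi.mul_def, mul_assoc] using hint1)
      (by simpa [Pi.mul_def] using hint2)
      (by simpa [Pi.mul_def] using hdecayB)
      (by simpa [Pi.mul_def] using hdecayT)
    simpa using this
  have hA : (∫ r : ℝ, χ r * gtil r * p r) = (2 / σ2) * ∫ r : ℝ, (H r) ^ 2 / p r := by
    have h1 : (∫ r : ℝ, χ r * gtil r * p r) = ∫ r : ℝ, χ r * (gtil r * p r) := by
      simp [mul_assoc]
    rw [h1, hibp]
    have h2 : (∫ r : ℝ, deriv χ r * H r)
        = ∫ r : ℝ, -((2 / σ2) * ((H r) ^ 2 / p r)) := by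
      exact integral_congr_ae (Filter.Eventually.of_forall key1)
    rw [h2, integral_neg, neg_neg, integral_const_mul]
  have hB : (σ2 / 2) * (∫ r : ℝ, (deriv χ r) ^ 2 * p r)
      = (2 / σ2) * ∫ r : ℝ, (H r) ^ 2 / p r := by
    have h2 : (∫ r : ℝ, (deriv χ r) ^ 2 * p r)
        = (4 / σ2 ^ 2) * ∫ r : ℝ, (H r) ^ 2 / p r := by
      rw [← integral_const_mul]
      exact integral_congr_ae (Filter.Eventually.of_forall key2)
    rw [h2]; field_simp; ring
  refine ⟨by rw [hA, hB], hB, ?_⟩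
  rw [hA]
  have : 0 ≤ ∫ r : ℝ, (H r) ^ 2 / p r :=
    integral_nonneg fun r => div_nonneg (sq_nonneg _) (hp r).le
  positivity
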